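/- arXiv:1203.6299 — 2 statements merged into one kernel-verified Lean document; each statement's English description precedes it below -/
import Mathlib

section
/- Let D ⊆ ℝ≥0 be closed and discrete, U ⊆ ℝ an open interval, and f : D → ℝ with f(D) dense in U. For c ∈ U, define L(c) = {d ∈ D : f(d) < c and f(D ∩ [0,d)) ∩ (f(d), c) = ∅} and R(c) = {d ∈ D : f(d) > c and f(D ∩ [0,d)) ∩ (c, f(d)) = ∅}. Then sup f(L(c)) = c = inf f(R(c)) for every c ∈ U. -/
/-- Best approximations of `c` from the left. -/
def bestL (D : Set ℝ) (f : ℝ → ℝ) (c : ℝ) : Set ℝ :=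
  {d | d ∈ D ∧ f d < c ∧ ∀ e ∈ D, e < d → f e ∉ Set.Ioo (f d) c}

/-- Best approximations of `c` from the right. -/
def bestR (D : Set ℝ) (f : ℝ → ℝ) (c : ℝ) : Set ℝ :=
  {d | d ∈ D ∧ c < f d ∧ ∀ e ∈ D, e < d → f e ∉ Set.Ioo c (f d)}

/-- A closed discrete set of nonnegative reals has finite intersection with `Iic d`. -/
lemma finite_inter_Iic (D : Set ℝ) (hD0 : D ⊆ Set.Ici 0) (hDclosed : IsClosed D)
    (hDdisc : ∀ d ∈ D, ∃ ε > 0, ∀ e ∈ D, e ≠ d → ε ≤ |e - d|) (d : ℝ) :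
    (D ∩ Set.Iic d).Finite := by
  by_contra hinf
  have hinf : (D ∩ Set.Iic d).Infinite := hinf
  have hsub : D ∩ Set.Iic d ⊆ Set.Icc 0 d := fun x hx => ⟨hD0 hx.1, hx.2⟩
  obtain ⟨x, -, hx⟩ := hinf.exists_accPt_of_subset_isCompact isCompact_Icc hsub
  have hxD : x ∈ D := by
    have hcl : x ∈ closure (D ∩ Set.Iic d) := by
      rw [mem_closure_iff_clusterPt]
      exact hx.clusterPt
    exact hDclosed.closure_subset ((closure_mono Set.inter_subset_left) hcl)
  obtain ⟨ε, hε, hsep⟩ := hDdisc x hxD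
  rw [accPt_iff_nhds] at hx
  obtain ⟨y, ⟨hyb, hyD, -⟩, hyx⟩ := hx (Metric.ball x ε) (Metric.ball_mem_nhds x hε)
  have := hsep y hyD hyx
  rw [Metric.mem_ball, Real.dist_eq] at hyb
  linarith [abs_nonneg (y - x)]

/-- Refinement: from any `d ∈ D` with `w < f d < c` we can extract a best left
approximation with value above `w`. -/
lemma exists_bestL (D : Set ℝ) (f : ℝ → ℝ) (c : ℝ)
    (hfin : ∀ d, (D ∩ Set.Iic d).Finite)
    {w d : ℝ} (hdD : d ∈ D) (hw : w < f d) (hdc : f d < c) :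
    ∃ e ∈ bestL D f c, w < f e := by
  set S : Set ℝ := {e | e ∈ D ∧ e ≤ d ∧ f e ∈ Set.Ioo w c} with hS
  have hSfin : S.Finite := (hfin d).subset fun x hx => ⟨hx.1, hx.2.1⟩
  have hSne : S.Nonempty := ⟨d, hdD, le_refl d, hw, hdc⟩
  obtain ⟨e, heS, hmax⟩ := hSfin.exists_maximalFor f S hSne
  refine ⟨e, ⟨heS.1, heS.2.2.2, ?_⟩, heS.2.2.1⟩
  intro e' he'D he'lt he'mem
  have he'S : e' ∈ S := ⟨he'D, le_of_lt (lt_of_lt_of_le he'lt heS.2.1),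
    lt_trans heS.2.2.1 he'mem.1, he'mem.2⟩
  have := hmax (j := e') he'S (le_of_lt he'mem.1)
  exact absurd this (not_le.mpr he'mem.1)

/-- Main one-sided lemma. -/
lemma sSup_bestL (D : Set ℝ) (f : ℝ → ℝ) (c : ℝ)
    (hfin : ∀ d, (D ∩ Set.Iic d).Finite)
    (happrox : ∀ w < c, ∃ d ∈ D, w < f d ∧ f d < c) :
    sSup (f '' bestL D f c) = c := by
  obtain ⟨d₀, hd₀D, hd₀w, hd₀c⟩ := happrox (c - 1) (by linarith)
  obtain ⟨e₀, he₀, -⟩ := exists_bestL D f c hfin hd₀D hd₀w hd₀c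
  have hne : (f '' bestL D f c).Nonempty := ⟨f e₀, e₀, he₀, rfl⟩
  apply csSup_eq_of_forall_le_of_forall_lt_exists_gt hne
  · rintro x ⟨e, he, rfl⟩
    exact le_of_lt he.2.1
  · intro w hw
    obtain ⟨d, hdD, hwd, hdc⟩ := happrox w hw
    obtain ⟨e, he, hwe⟩ := exists_bestL D f c hfin hdD hwd hdc
    exact ⟨f e, ⟨e, he, rfl⟩, hwe⟩

lemma bestR_eq_bestL_neg (D : Set ℝ) (f : ℝ → ℝ) (c : ℝ) :
    bestR D f c = bestL D (fun x => -f x) (-c) := by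
  ext d
  simp only [bestR, bestL, Set.mem_setOf_eq, Set.mem_Ioo]
  constructor
  · rintro ⟨h1, h2, h3⟩
    exact ⟨h1, by linarith, fun e heD hed ⟨ha, hb⟩ => h3 e heD hed ⟨by linarith, by linarith⟩⟩
  · rintro ⟨h1, h2, h3⟩
    exact ⟨h1, by linarith, fun e heD hed ⟨ha, hb⟩ => h3 e heD hed ⟨by linarith, by linarith⟩⟩

theorem stmt0 (D U : Set ℝ) (f : ℝ → ℝ)
    (hD0 : D ⊆ Set.Ici 0) (hDclosed : IsClosed D)
    (hDdisc : ∀ d ∈ D, ∃ ε > 0, ∀ e ∈ D, e ≠ d → ε ≤ |e - d|)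
    (a b : ℝ) (hab : a < b) (hU : U = Set.Ioo a b)
    (hdense : U ⊆ closure (f '' D))
    (c : ℝ) (hc : c ∈ U) :
    sSup (f '' bestL D f c) = c ∧ sInf (f '' bestR D f c) = c := by
  subst hU
  obtain ⟨hac, hcb⟩ := hc
  have hfin := finite_inter_Iic D hD0 hDclosed hDdisc
  -- density consequence, below c
  have happL : ∀ w < c, ∃ d ∈ D, w < f d ∧ f d < c := by
    intro w hw
    set y := max w a with hy
    have hya : a ≤ y := le_max_right _ _
    have hyc : y < c := max_lt hw hac
    set m := (y + c) / 2 with hm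
    have hmU : m ∈ Set.Ioo a b := ⟨by simp [hm]; nlinarith, by simp [hm]; nlinarith⟩
    have := hdense hmU
    rw [Metric.mem_closure_iff] at this
    obtain ⟨x, ⟨d, hdD, rfl⟩, hdist⟩ := this ((c - y) / 2) (by linarith)
    rw [Real.dist_eq, abs_lt] at hdist
    refine ⟨d, hdD, lt_of_le_of_lt (le_max_left w a) ?_, ?_⟩
    · simp only [hm] at hdist; linarith [hdist.1, hdist.2]
    · simp only [hm] at hdist; linarith [hdist.1, hdist.2]
  -- density consequence, above c
  have happR : ∀ w, c < w → ∃ d ∈ D, c < f d ∧ f d < w := by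
    intro w hw
    set y := min w b with hy
    have hyb : y ≤ b := min_le_right _ _
    have hyc : c < y := lt_min hw hcb
    set m := (c + y) / 2 with hm
    have hmU : m ∈ Set.Ioo a b := ⟨by simp [hm]; nlinarith, by simp [hm]; nlinarith⟩
    have := hdense hmU
    rw [Metric.mem_closure_iff] at this
    obtain ⟨x, ⟨d, hdD, rfl⟩, hdist⟩ := this ((y - c) / 2) (by linarith)
    rw [Real.dist_eq, abs_lt] at hdist
    refine ⟨d, hdD, ?_, lt_of_lt_of_le ?_ (min_le_left w b)⟩
    · simp only [hm] at hdist; linarith [hdist.1, hdist.2]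
    · simp only [hm] at hdist; linarith [hdist.1, hdist.2]
  constructor
  · exact sSup_bestL D f c hfin happL
  · have key : sSup ((fun x => -f x) '' bestL D (fun x => -f x) (-c)) = -c := by
      apply sSup_bestL D (fun x => -f x) (-c) hfin
      intro w hw
      obtain ⟨d, hdD, h1, h2⟩ := happR (-w) (by linarith)
      exact ⟨d, hdD, by linarith, by linarith⟩
    have himg : (fun x => -f x) '' bestL D (fun x => -f x) (-c)
        = -(f '' bestR D f c) := by
      rw [bestR_eq_bestL_neg]
      ext x
      simp only [Set.mem_image, Set.mem_neg]
      constructor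
      · rintro ⟨e, he, rfl⟩; exact ⟨e, he, by ring⟩
      · rintro ⟨e, he, hx⟩; exact ⟨e, he, by rw [hx]; ring⟩
    rw [himg] at key
    rw [Real.sInf_def, key]
    ring
end

section
/- Let D ⊆ ℝ≥0 be closed and discrete, U an open interval, and f : D → ℝ with f(D) dense in U. Let d₁ ≤ d₂ in D and let (L, R) be a finite approximation up to d₁ with L, R nonempty. Then there exists a unique finite approximation (L', R') up to d₂ extending (L, R) such that L = L'. -/
/-- `(L, R)` is a finite approximation up to `d`. -/
def FinApprox (D : Set ℝ) (f : ℝ → ℝ) (d : ℝ) (L R : Finset ℝ) : Prop :=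
  (↑L : Set ℝ) ⊆ D ∩ Set.Icc 0 d ∧ (↑R : Set ℝ) ⊆ D ∩ Set.Icc 0 d ∧
  (∀ l ∈ L, ∀ r ∈ R, f l < f r) ∧
  StrictMonoOn f (↑L : Set ℝ) ∧ StrictAntiOn f (↑R : Set ℝ) ∧
  (∀ e ∈ D, e ≤ d → (∃ l ∈ L, l ≤ e ∧ f e ≤ f l) ∨ (∃ r ∈ R, r ≤ e ∧ f r ≤ f e))

theorem stmt3 (D U : Set ℝ) (f : ℝ → ℝ)
    (hD0 : D ⊆ Set.Ici 0) (hDclosed : IsClosed D)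
    (hDdisc : ∀ d ∈ D, ∃ ε > 0, ∀ e ∈ D, e ≠ d → ε ≤ |e - d|)
    (a b : ℝ) (hab : a < b) (hU : U = Set.Ioo a b)
    (hdense : U ⊆ closure (f '' D))
    (d₁ d₂ : ℝ) (hd₁ : d₁ ∈ D) (hd₂ : d₂ ∈ D) (hd : d₁ ≤ d₂)
    (L R : Finset ℝ) (hL : L.Nonempty) (hR : R.Nonempty)
    (happ : FinApprox D f d₁ L R) :
    ∃! p : Finset ℝ × Finset ℝ,
      FinApprox D f d₂ p.1 p.2 ∧ L ⊆ p.1 ∧ R ⊆ p.2 ∧ p.1 = L := by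
  classical
  obtain ⟨hL1, hR1, hLR, hmonoL, hantiR, hcov⟩ := happ
  -- D ∩ [0, d₂] is finite
  have hTfin : (D ∩ Set.Icc 0 d₂).Finite := by
    by_contra hinf
    have hinf' : (D ∩ Set.Icc 0 d₂).Infinite := hinf
    obtain ⟨x, hxK, hacc⟩ := hinf'.exists_accPt_of_subset_isCompact isCompact_Icc
      Set.inter_subset_right
    have haccn := accPt_iff_nhds.mp hacc
    have hxD : x ∈ D := by
      rw [← hDclosed.closure_eq]
      rw [mem_closure_iff_nhds]
      intro t ht
      obtain ⟨y, hy, hyne⟩ := haccn t ht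
      exact ⟨y, hy.1, hy.2.1⟩
    obtain ⟨ε, hε, hsep⟩ := hDdisc x hxD
    obtain ⟨y, hy, hyne⟩ := haccn (Metric.ball x ε) (Metric.ball_mem_nhds x hε)
    have h1 := hsep y hy.2.1 hyne
    have h2 : |y - x| < ε := by
      have := hy.1
      rwa [Metric.mem_ball, Real.dist_eq] at this
    linarith
  set T : Finset ℝ := hTfin.toFinset with hTdef
  have hmemT : ∀ x : ℝ, x ∈ T ↔ x ∈ D ∧ x ∈ Set.Icc 0 d₂ := by
    intro x; rw [hTdef, Set.Finite.mem_toFinset]; rfl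
  set l₀ := L.max' hL with hl₀def
  have hl₀L : l₀ ∈ L := L.max'_mem hL
  set M := f l₀ with hMdef
  have hfleM : ∀ l ∈ L, f l ≤ M := by
    intro l hl
    rcases eq_or_lt_of_le (L.le_max' l hl) with h | h
    · rw [h]
    · exact le_of_lt (hmonoL (Finset.mem_coe.mpr hl) (Finset.mem_coe.mpr hl₀L) h)
  -- the candidate R'
  set R' : Finset ℝ := T.filter
    (fun e => M < f e ∧ ∀ e' ∈ T, M < f e' → e' < e → f e < f e') with hR'def
  have hmemR' : ∀ x : ℝ, x ∈ R' ↔ x ∈ T ∧ M < f x ∧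
      ∀ e' ∈ T, M < f e' → e' < x → f x < f e' := by
    intro x; rw [hR'def, Finset.mem_filter]
  -- R ⊆ R'
  have hRsub : R ⊆ R' := by
    intro r hr
    have hrD := hR1 (Finset.mem_coe.mpr hr)
    rw [hmemR']
    refine ⟨(hmemT r).mpr ⟨hrD.1, hrD.2.1, le_trans hrD.2.2 hd⟩,
      hLR l₀ hl₀L r hr, ?_⟩
    intro e' he'T hMe' he'r
    have he'D : e' ∈ D := ((hmemT e').mp he'T).1
    have he'd₁ : e' ≤ d₁ := le_trans (le_of_lt he'r) hrD.2.2
    rcases hcov e' he'D he'd₁ with ⟨l, hl, _, hfel⟩ | ⟨r₂, hr₂, hr₂e', hfr₂⟩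
    · exact absurd (le_trans hfel (hfleM l hl)) (not_le.mpr hMe')
    · have hr₂r : r₂ < r := lt_of_le_of_lt hr₂e' he'r
      have := hantiR (Finset.mem_coe.mpr hr₂) (Finset.mem_coe.mpr hr) hr₂r
      linarith
  -- any extension's R part is contained in R'
  have hsub' : ∀ R'' : Finset ℝ, FinApprox D f d₂ L R'' → R'' ⊆ R' := by
    intro R'' ⟨_, hR1'', hLR'', _, hantiR'', hcov''⟩ r hr
    have hrD := hR1'' (Finset.mem_coe.mpr hr)
    rw [hmemR']
    refine ⟨(hmemT r).mpr ⟨hrD.1, hrD.2⟩, hLR'' l₀ hl₀L r hr, ?_⟩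
    intro e' he'T hMe' he'r
    have he'D : e' ∈ D := ((hmemT e').mp he'T).1
    have he'd₂ : e' ≤ d₂ := ((hmemT e').mp he'T).2.2
    rcases hcov'' e' he'D he'd₂ with ⟨l, hl, _, hfel⟩ | ⟨r₂, hr₂, hr₂e', hfr₂⟩
    · exact absurd (le_trans hfel (hfleM l hl)) (not_le.mpr hMe')
    · have hr₂r : r₂ < r := lt_of_le_of_lt hr₂e' he'r
      have := hantiR'' (Finset.mem_coe.mpr hr₂) (Finset.mem_coe.mpr hr) hr₂r
      linarith
  -- (L, R') is a finite approximation up to d₂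
  have happ' : FinApprox D f d₂ L R' := by
    refine ⟨?_, ?_, ?_, hmonoL, ?_, ?_⟩
    · intro l hl
      have := hL1 hl
      exact ⟨this.1, this.2.1, le_trans this.2.2 hd⟩
    · intro r hr
      have := ((hmemR' r).mp (Finset.mem_coe.mp hr)).1
      exact (hmemT r).mp this
    · intro l hl r hr
      exact lt_of_le_of_lt (hfleM l hl) ((hmemR' r).mp hr).2.1
    · -- strict anti on R'
      intro r₁ hr₁ r₂ hr₂ h12
      obtain ⟨hT1, hM1, _⟩ := (hmemR' r₁).mp (Finset.mem_coe.mp hr₁)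
      obtain ⟨_, _, hrec2⟩ := (hmemR' r₂).mp (Finset.mem_coe.mp hr₂)
      exact hrec2 r₁ hT1 hM1 h12
    · -- covering
      intro e heD hed₂
      have heT : e ∈ T := (hmemT e).mpr ⟨heD, hD0 heD, hed₂⟩
      by_cases hMe : M < f e
      · -- find an argmin of f on S ∩ [0, e]
        right
        set S : Finset ℝ := T.filter (fun x => M < f x ∧ x ≤ e) with hSdef
        have heS : e ∈ S := by
          rw [hSdef, Finset.mem_filter]; exact ⟨heT, hMe, le_refl e⟩
        have hSne : S.Nonempty := ⟨e, heS⟩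
        have hSimgne : (S.image f).Nonempty := hSne.image f
        set m := (S.image f).min' hSimgne with hmdef
        obtain ⟨r₀, hr₀S, hr₀m⟩ := Finset.mem_image.mp ((S.image f).min'_mem hSimgne)
        set A : Finset ℝ := S.filter (fun x => f x = m) with hAdef
        have hAne : A.Nonempty := ⟨r₀, by rw [hAdef, Finset.mem_filter]; exact ⟨hr₀S, hr₀m⟩⟩
        set r := A.min' hAne with hrdef
        have hrA : r ∈ A := A.min'_mem hAne
        obtain ⟨hrS, hfrm⟩ := Finset.mem_filter.mp hrA
        obtain ⟨hrT, hMr, hre⟩ := Finset.mem_filter.mp hrS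
        refine ⟨r, ?_, hre, ?_⟩
        · rw [hmemR']
          refine ⟨hrT, hMr, ?_⟩
          intro e' he'T hMe' he'r
          have he'S : e' ∈ S := by
            rw [hSdef, Finset.mem_filter]
            exact ⟨he'T, hMe', le_trans (le_of_lt he'r) hre⟩
          have hmle : m ≤ f e' := Finset.min'_le _ _ (Finset.mem_image_of_mem f he'S)
          rcases eq_or_lt_of_le hmle with h | h
          · exfalso
            have he'A : e' ∈ A := by
              rw [hAdef, Finset.mem_filter]; exact ⟨he'S, h.symm⟩
            exact absurd (A.min'_le e' he'A) (not_le.mpr he'r)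
          · rw [hfrm]; exact h
        · rw [hfrm]
          exact Finset.min'_le _ _ (Finset.mem_image_of_mem f heS)
      · -- f e ≤ M
        push_neg at hMe
        by_cases hl₀e : l₀ ≤ e
        · exact Or.inl ⟨l₀, hl₀L, hl₀e, hMe⟩
        · push_neg at hl₀e
          have hed₁ : e ≤ d₁ := le_trans (le_of_lt hl₀e) (hL1 (Finset.mem_coe.mpr hl₀L)).2.2
          rcases hcov e heD hed₁ with ⟨l, hl, hle, hfel⟩ | ⟨r, hrR, hre, hfr⟩
          · exact Or.inl ⟨l, hl, hle, hfel⟩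
          · exact Or.inr ⟨r, hRsub hrR, hre, hfr⟩
  -- R' ⊆ R'' for any extension
  have hsub'' : ∀ R'' : Finset ℝ, FinApprox D f d₂ L R'' → R' ⊆ R'' := by
    intro R'' happ'' r hr
    obtain ⟨-, -, -, -, -, hcov''⟩ := id happ''
    obtain ⟨hrT, hMr, hrec⟩ := (hmemR' r).mp hr
    obtain ⟨hrD, _, hrd₂⟩ := (hmemT r).mp hrT
    rcases hcov'' r hrD hrd₂ with ⟨l, hl, _, hfrl⟩ | ⟨r₂, hr₂, hr₂r, hfr₂⟩
    · exact absurd (le_trans hfrl (hfleM l hl)) (not_le.mpr hMr)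
    · rcases eq_or_lt_of_le hr₂r with h | h
      · rwa [← h]
      · exfalso
        have hr₂R' : r₂ ∈ R' := hsub' R'' happ'' hr₂
        obtain ⟨hr₂T, hMr₂, _⟩ := (hmemR' r₂).mp hr₂R'
        have := hrec r₂ hr₂T hMr₂ h
        linarith
  refine ⟨(L, R'), ⟨happ', Finset.Subset.refl L, hRsub, rfl⟩, ?_⟩
  rintro ⟨L₂, R₂⟩ ⟨happ₂, _, hRsub₂, hL₂⟩
  simp only at hL₂ happ₂ hRsub₂ ⊢
  subst hL₂
  have h1 : R₂ ⊆ R' := hsub' R₂ happ₂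
  have h2 : R' ⊆ R₂ := hsub'' R₂ happ₂
  exact Prod.ext rfl (Finset.Subset.antisymm h1 h2)
end
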